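/- In the algebra E′, the bidegree (5, 261) component E′^{5,261} is a one-dimensional F₂-vector space with basis the class of h₀D₃(2); moreover the monomials h₀³h₁h₈, h₀h₁²h₇², and h₀h₂h₆²h₇ all equal 0 in E′. (This verifies Ext_A^{5,5+256}(ℤ/2,ℤ/2) = ⟨h₀D₃(2)⟩.) -/

import Mathlib

set_option synthInstance.maxHeartbeats 400000
set_option maxRecDepth 4000
set_option maxHeartbeats 1000000

noncomputable section

open MvPolynomial

/-- Generators of Chen's algebra `E′` in homological degrees ≤ 5.
Here `g i` denotes the generator `g_{i+1}` (the family `g` starts at index 1). -/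
inductive Gen : Type
  | h (i : ℕ)
  | c (i : ℕ)
  | d (i : ℕ)
  | e (i : ℕ)
  | f (i : ℕ)
  | g (i : ℕ)
  | p (i : ℕ)
  | D3 (i : ℕ)
  | p' (i : ℕ)
  | P1h1
  | P1h2
  | n (i : ℕ)
  | x (i : ℕ)
  | D1 (i : ℕ)
  | H1 (i : ℕ)
  | Q3 (i : ℕ)
  | K (i : ℕ)
  | J (i : ℕ)
  | T (i : ℕ)
  | V (i : ℕ)
  | V' (i : ℕ)
  | U (i : ℕ)

/-- Homological degree of the generators. -/
def hdeg : Gen → ℕ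
  | .h _ => 1
  | .c _ => 3
  | .d _ => 4
  | .e _ => 4
  | .f _ => 4
  | .g _ => 4
  | .p _ => 4
  | .D3 _ => 4
  | .p' _ => 4
  | _ => 5

/-- Internal degree of the generators. -/
def ideg : Gen → ℕ
  | .h i => 2 ^ i
  | .c i => 2 ^ (i + 3) + 2 ^ (i + 1) + 2 ^ i
  | .d i => 2 ^ (i + 4) + 2 ^ (i + 1)
  | .e i => 2 ^ (i + 4) + 2 ^ (i + 2) + 2 ^ i
  | .f i => 2 ^ (i + 4) + 2 ^ (i + 2) + 2 ^ (i + 1)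
  | .g i => 2 ^ (i + 4) + 2 ^ (i + 3)      -- internal degree of `g_{i+1}`
  | .p i => 2 ^ (i + 5) + 2 ^ (i + 2) + 2 ^ i
  | .D3 i => 2 ^ (i + 6) + 2 ^ i
  | .p' i => 2 ^ (i + 6) + 2 ^ (i + 3) + 2 ^ i
  | .P1h1 => 14
  | .P1h2 => 16
  | .n i => 2 ^ (i + 5) + 2 ^ (i + 2)
  | .x i => 2 ^ (i + 5) + 2 ^ (i + 3) + 2 ^ (i + 1)
  | .D1 i => 2 ^ (i + 5) + 2 ^ (i + 4) + 2 ^ (i + 2) + 2 ^ i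
  | .H1 i => 2 ^ (i + 6) + 2 ^ (i + 1) + 2 ^ i
  | .Q3 i => 2 ^ (i + 6) + 2 ^ (i + 3)
  | .K i => 2 ^ (i + 7) + 2 ^ (i + 1)
  | .J i => 2 ^ (i + 7) + 2 ^ (i + 2) + 2 ^ i
  | .T i => 2 ^ (i + 7) + 2 ^ (i + 4) + 2 ^ (i + 1)
  | .V i => 2 ^ (i + 7) + 2 ^ (i + 5) + 2 ^ i
  | .V' i => 2 ^ (i + 8) + 2 ^ i
  | .U i => 2 ^ (i + 8) + 2 ^ (i + 3) + 2 ^ i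

abbrev P := MvPolynomial Gen (ZMod 2)

/-- Chen's relations in homological degrees ≤ 5: the relations
`hᵢhᵢ₊₁ = 0`, `hᵢhᵢ₊₂² = 0`, `hᵢ²hᵢ₊₃² = 0`, `hᵢ³ = hᵢ₋₁²hᵢ₊₁` (i ≥ 1),
`hⱼcᵢ = 0` for `j ∈ {i-1, i, i+2, i+3}`, together with Chen's 39 families of
degree-5 relations (with `g j` standing for `g_{j+1}`). -/
def rels : Set P :=
  ⋃ j : ℕ,
    ({ X (Gen.h j) * X (Gen.h (j + 1)),
       X (Gen.h j) * X (Gen.h (j + 2)) ^ 2,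
       X (Gen.h j) ^ 2 * X (Gen.h (j + 3)) ^ 2,
       X (Gen.h (j + 1)) ^ 3 - X (Gen.h j) ^ 2 * X (Gen.h (j + 2)),
       X (Gen.h j) * X (Gen.c (j + 1)),
       X (Gen.h j) * X (Gen.c j),
       X (Gen.h (j + 2)) * X (Gen.c j),
       X (Gen.h (j + 3)) * X (Gen.c j),
       -- Chen's degree-5 relations:
       X (Gen.h (j + 4)) ^ 2 * X (Gen.c j),
       X (Gen.h (j + 3)) * X (Gen.h j) * X (Gen.c (j + 2)),
       X (Gen.h (j + 1)) ^ 2 * X (Gen.c j),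
       X (Gen.h j) * X (Gen.d (j + 1)),
       X (Gen.h (j + 3)) * X (Gen.d j),
       X (Gen.h (j + 4)) * X (Gen.d j),
       X (Gen.h j) * X (Gen.e (j + 1)),
       X (Gen.h (j + 4)) * X (Gen.e j),
       X (Gen.h (j + 1)) * X (Gen.f j),
       X (Gen.h (j + 3)) * X (Gen.f j),
       X (Gen.h (j + 4)) * X (Gen.f j),
       X (Gen.h (j + 3)) * X (Gen.g j),
       X (Gen.h j) * X (Gen.p (j + 1)),
       X (Gen.h (j + 1)) * X (Gen.p j),
       X (Gen.h (j + 2)) * X (Gen.p j),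
       X (Gen.h (j + 4)) * X (Gen.p j),
       X (Gen.h (j + 5)) * X (Gen.p j),
       X (Gen.h j) * X (Gen.D3 (j + 1)),
       X (Gen.h j) * X (Gen.D3 j),
       X (Gen.h (j + 5)) * X (Gen.D3 j),
       X (Gen.h (j + 6)) * X (Gen.D3 j),
       X (Gen.h j) * X (Gen.p' (j + 1)),
       X (Gen.h (j + 2)) * X (Gen.p' j),
       X (Gen.h (j + 3)) * X (Gen.p' j),
       X (Gen.h (j + 6)) * X (Gen.p' j),
       X (Gen.h (j + 4)) * X (Gen.h (j + 1)) * X (Gen.c j) - X (Gen.h (j + 3)) * X (Gen.e j),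
       X (Gen.h (j + 4)) * X (Gen.h j) * X (Gen.c (j + 3)) - X (Gen.h (j + 5)) * X (Gen.p' j),
       X (Gen.h (j + 5)) ^ 2 * X (Gen.c j) - X (Gen.h (j + 1)) * X (Gen.p' j),
       X (Gen.h j) * X (Gen.d (j + 2)) - X (Gen.h (j + 3)) * X (Gen.D3 j),
       X (Gen.h (j + 1)) * X (Gen.d (j + 1)) - X (Gen.h j) * X (Gen.p j),
       X (Gen.h (j + 2)) * X (Gen.d (j + 1)) - X (Gen.h (j + 4)) * X (Gen.g j),
       X (Gen.h (j + 2)) * X (Gen.d j) - X (Gen.h j) * X (Gen.e j),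
       X (Gen.h (j + 1)) * X (Gen.e j) - X (Gen.h j) * X (Gen.f j),
       X (Gen.h (j + 2)) * X (Gen.e (j + 1)) - X (Gen.h j) ^ 2 * X (Gen.c (j + 2)),
       X (Gen.h (j + 2)) * X (Gen.e j) - X (Gen.h j) * X (Gen.g j),
       X (Gen.h j) * X (Gen.f (j + 2)) - X (Gen.h (j + 4)) * X (Gen.p' j),
       X (Gen.h j) * X (Gen.f (j + 1)) - X (Gen.h (j + 3)) * X (Gen.p j),
       X (Gen.h (j + 2)) * X (Gen.f j) - X (Gen.h (j + 1)) * X (Gen.g j),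
       X (Gen.h (j + 3)) * X (Gen.g (j + 1)) - X (Gen.h (j + 5)) * X (Gen.g j) } : Set P)

def relIdeal : Ideal P := Ideal.span rels

/-- Chen's algebra `E′`, isomorphic to `Ext_A^{k,*}(ℤ/2, ℤ/2)` in homological degrees `k ≤ 5`. -/
abbrev E' := P ⧸ relIdeal

def mkE : P →ₐ[ZMod 2] E' := Ideal.Quotient.mkₐ (ZMod 2) relIdeal

/-- The bidegree `(k, d)` component `E′^{k,d}` of `E′`: the image of the space of polynomials
that are weighted homogeneous of homological degree `k` and internal degree `d`. -/
def component (k d : ℕ) : Submodule (ZMod 2) E' :=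
  Submodule.map mkE.toLinearMap
    (weightedHomogeneousSubmodule (ZMod 2) hdeg k ⊓
      weightedHomogeneousSubmodule (ZMod 2) ideg d)


-- ===================== auxiliary development =====================

deriving instance DecidableEq for Gen

section Aux

open Finsupp

lemma hdeg_pos (g : Gen) : 1 ≤ hdeg g := by cases g <;> simp [hdeg]

lemma hdeg_cases (g : Gen) : hdeg g = 1 ∨ hdeg g = 3 ∨ hdeg g = 4 ∨ hdeg g = 5 := by
  cases g <;> simp [hdeg]

lemma hdeg_eq_one {g : Gen} (h : hdeg g = 1) : ∃ i, g = Gen.h i := by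
  cases g <;> simp_all [hdeg]

lemma hdeg_eq_three {g : Gen} (h : hdeg g = 3) : ∃ i, g = Gen.c i := by
  cases g <;> simp_all [hdeg]

lemma hdeg_eq_four {g : Gen} (h : hdeg g = 4) :
    (∃ i, g = Gen.d i) ∨ (∃ i, g = Gen.e i) ∨ (∃ i, g = Gen.f i) ∨ (∃ i, g = Gen.g i) ∨
    (∃ i, g = Gen.p i) ∨ (∃ i, g = Gen.D3 i) ∨ (∃ i, g = Gen.p' i) := by
  cases g <;> simp_all [hdeg]

lemma hdeg_eq_five {g : Gen} (h : hdeg g = 5) :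
    g = Gen.P1h1 ∨ g = Gen.P1h2 ∨ (∃ i, g = Gen.n i) ∨ (∃ i, g = Gen.x i) ∨
    (∃ i, g = Gen.D1 i) ∨ (∃ i, g = Gen.H1 i) ∨ (∃ i, g = Gen.Q3 i) ∨ (∃ i, g = Gen.K i) ∨
    (∃ i, g = Gen.J i) ∨ (∃ i, g = Gen.T i) ∨ (∃ i, g = Gen.V i) ∨ (∃ i, g = Gen.V' i) ∨
    (∃ i, g = Gen.U i) := by
  cases g <;> simp_all [hdeg]

lemma pow_le_8 {m : ℕ} (h : 2 ^ m ≤ 261) : m ≤ 8 := by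
  by_contra h'
  have h9 : (2:ℕ) ^ 9 ≤ 2 ^ m := Nat.pow_le_pow_right (by norm_num) (by omega)
  norm_num at h9; omega

set_option maxHeartbeats 1000000 in
lemma S1fin : ∀ a b c d e : Fin 9, 2^a.val+2^b.val+2^c.val+2^d.val+2^e.val = 261 →
    (({a.val,b.val,c.val,d.val,e.val} : Multiset ℕ) = {0,0,0,1,8} ∨
     ({a.val,b.val,c.val,d.val,e.val} : Multiset ℕ) = {0,1,1,7,7} ∨
     ({a.val,b.val,c.val,d.val,e.val} : Multiset ℕ) = {0,2,6,6,7}) := by decide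

lemma S1 (a b c d e : ℕ) (h : 2^a+2^b+2^c+2^d+2^e = 261) :
    (({a,b,c,d,e} : Multiset ℕ) = {0,0,0,1,8} ∨
     ({a,b,c,d,e} : Multiset ℕ) = {0,1,1,7,7} ∨
     ({a,b,c,d,e} : Multiset ℕ) = {0,2,6,6,7}) := by
  have ha : a ≤ 8 := pow_le_8 (Nat.le.intro (k := 2^b+2^c+2^d+2^e) (by linarith))
  have hb : b ≤ 8 := pow_le_8 (Nat.le.intro (k := 2^a+2^c+2^d+2^e) (by linarith))
  have hc : c ≤ 8 := pow_le_8 (Nat.le.intro (k := 2^a+2^b+2^d+2^e) (by linarith))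
  have hd : d ≤ 8 := pow_le_8 (Nat.le.intro (k := 2^a+2^b+2^c+2^e) (by linarith))
  have he : e ≤ 8 := pow_le_8 (Nat.le.intro (k := 2^a+2^b+2^c+2^d) (by linarith))
  exact S1fin ⟨a, by omega⟩ ⟨b, by omega⟩ ⟨c, by omega⟩ ⟨d, by omega⟩ ⟨e, by omega⟩ h

lemma S2fin : ∀ (a b : Fin 9) (i : Fin 6),
    2^a.val + 2^b.val + 2^(i.val+3) + 2^(i.val+1) + 2^i.val ≠ 261 := by decide

lemma S2 (a b i : ℕ) : 2^a + 2^b + 2^(i+3) + 2^(i+1) + 2^i ≠ 261 := by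
  intro h
  have ha : a ≤ 8 := pow_le_8 (Nat.le.intro (k := 2^b+2^(i+3)+2^(i+1)+2^i) (by linarith))
  have hb : b ≤ 8 := pow_le_8 (Nat.le.intro (k := 2^a+2^(i+3)+2^(i+1)+2^i) (by linarith))
  have hi : i + 3 ≤ 8 := pow_le_8 (Nat.le.intro (k := 2^a+2^b+2^(i+1)+2^i) (by linarith))
  exact S2fin ⟨a, by omega⟩ ⟨b, by omega⟩ ⟨i, by omega⟩ h

lemma S3dfin : ∀ (a : Fin 9) (i : Fin 5), 2^a.val + 2^(i.val+4) + 2^(i.val+1) ≠ 261 := by decide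

lemma S3d (a i : ℕ) : 2^a + 2^(i+4) + 2^(i+1) ≠ 261 := by
  intro h
  have ha : a ≤ 8 := pow_le_8 (Nat.le.intro (k := 2^(i+4)+2^(i+1)) (by linarith))
  have hi : i + 4 ≤ 8 := pow_le_8 (Nat.le.intro (k := 2^a+2^(i+1)) (by linarith))
  exact S3dfin ⟨a, by omega⟩ ⟨i, by omega⟩ h

lemma S3efin : ∀ (a : Fin 9) (i : Fin 5), 2^a.val + 2^(i.val+4) + 2^(i.val+2) + 2^i.val ≠ 261 := by
  decide

lemma S3e (a i : ℕ) : 2^a + 2^(i+4) + 2^(i+2) + 2^i ≠ 261 := by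
  intro h
  have ha : a ≤ 8 := pow_le_8 (Nat.le.intro (k := 2^(i+4)+2^(i+2)+2^i) (by linarith))
  have hi : i + 4 ≤ 8 := pow_le_8 (Nat.le.intro (k := 2^a+2^(i+2)+2^i) (by linarith))
  exact S3efin ⟨a, by omega⟩ ⟨i, by omega⟩ h

lemma S3ffin : ∀ (a : Fin 9) (i : Fin 5),
    2^a.val + 2^(i.val+4) + 2^(i.val+2) + 2^(i.val+1) ≠ 261 := by decide

lemma S3f (a i : ℕ) : 2^a + 2^(i+4) + 2^(i+2) + 2^(i+1) ≠ 261 := by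
  intro h
  have ha : a ≤ 8 := pow_le_8 (Nat.le.intro (k := 2^(i+4)+2^(i+2)+2^(i+1)) (by linarith))
  have hi : i + 4 ≤ 8 := pow_le_8 (Nat.le.intro (k := 2^a+2^(i+2)+2^(i+1)) (by linarith))
  exact S3ffin ⟨a, by omega⟩ ⟨i, by omega⟩ h

lemma S3gfin : ∀ (a : Fin 9) (i : Fin 5), 2^a.val + 2^(i.val+4) + 2^(i.val+3) ≠ 261 := by decide

lemma S3g (a i : ℕ) : 2^a + 2^(i+4) + 2^(i+3) ≠ 261 := by
  intro h
  have ha : a ≤ 8 := pow_le_8 (Nat.le.intro (k := 2^(i+4)+2^(i+3)) (by linarith))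
  have hi : i + 4 ≤ 8 := pow_le_8 (Nat.le.intro (k := 2^a+2^(i+3)) (by linarith))
  exact S3gfin ⟨a, by omega⟩ ⟨i, by omega⟩ h

lemma S3pfin : ∀ (a : Fin 9) (i : Fin 4), 2^a.val + 2^(i.val+5) + 2^(i.val+2) + 2^i.val ≠ 261 := by
  decide

lemma S3p (a i : ℕ) : 2^a + 2^(i+5) + 2^(i+2) + 2^i ≠ 261 := by
  intro h
  have ha : a ≤ 8 := pow_le_8 (Nat.le.intro (k := 2^(i+5)+2^(i+2)+2^i) (by linarith))
  have hi : i + 5 ≤ 8 := pow_le_8 (Nat.le.intro (k := 2^a+2^(i+2)+2^i) (by linarith))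
  exact S3pfin ⟨a, by omega⟩ ⟨i, by omega⟩ h

lemma S3D3fin : ∀ (a : Fin 9) (i : Fin 3),
    2^a.val + 2^(i.val+6) + 2^i.val = 261 → a.val = 0 ∧ i.val = 2 := by decide

lemma S3D3 (a i : ℕ) (h : 2^a + 2^(i+6) + 2^i = 261) : a = 0 ∧ i = 2 := by
  have ha : a ≤ 8 := pow_le_8 (Nat.le.intro (k := 2^(i+6)+2^i) (by linarith))
  have hi : i + 6 ≤ 8 := pow_le_8 (Nat.le.intro (k := 2^a+2^i) (by linarith))
  exact S3D3fin ⟨a, by omega⟩ ⟨i, by omega⟩ h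

lemma S3p'fin : ∀ (a : Fin 9) (i : Fin 3),
    2^a.val + 2^(i.val+6) + 2^(i.val+3) + 2^i.val ≠ 261 := by decide

lemma S3p' (a i : ℕ) : 2^a + 2^(i+6) + 2^(i+3) + 2^i ≠ 261 := by
  intro h
  have ha : a ≤ 8 := pow_le_8 (Nat.le.intro (k := 2^(i+6)+2^(i+3)+2^i) (by linarith))
  have hi : i + 6 ≤ 8 := pow_le_8 (Nat.le.intro (k := 2^a+2^(i+3)+2^i) (by linarith))
  exact S3p'fin ⟨a, by omega⟩ ⟨i, by omega⟩ h

lemma two_pow_succ (k : ℕ) : 2^(k+1) = 2 * 2^k := by ring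

lemma S4n (i : ℕ) : 2^(i+5) + 2^(i+2) ≠ 261 := by
  intro h
  rw [show i+5 = (i+4)+1 from rfl, two_pow_succ, show i+2 = (i+1)+1 from rfl, two_pow_succ] at h
  omega

lemma S4x (i : ℕ) : 2^(i+5) + 2^(i+3) + 2^(i+1) ≠ 261 := by
  intro h
  rw [show i+5 = (i+4)+1 from rfl, two_pow_succ, show i+3 = (i+2)+1 from rfl, two_pow_succ,
    show i+1 = i+1 from rfl, two_pow_succ] at h
  omega

lemma S4D1 (i : ℕ) : 2^(i+5) + 2^(i+4) + 2^(i+2) + 2^i ≠ 261 := by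
  rcases i with _ | i
  · norm_num
  · intro h
    rw [show i+1+5 = (i+5)+1 from rfl, two_pow_succ, show i+1+4 = (i+4)+1 from rfl, two_pow_succ,
      show i+1+2 = (i+2)+1 from rfl, two_pow_succ, two_pow_succ] at h
    omega

lemma S4H1 (i : ℕ) : 2^(i+6) + 2^(i+1) + 2^i ≠ 261 := by
  rcases i with _ | i
  · norm_num
  · intro h
    rw [show i+1+6 = (i+6)+1 from rfl, two_pow_succ, show i+1+1 = (i+1)+1 from rfl, two_pow_succ,
      two_pow_succ] at h
    omega

lemma S4Q3 (i : ℕ) : 2^(i+6) + 2^(i+3) ≠ 261 := by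
  intro h
  rw [show i+6 = (i+5)+1 from rfl, two_pow_succ, show i+3 = (i+2)+1 from rfl, two_pow_succ] at h
  omega

lemma S4K (i : ℕ) : 2^(i+7) + 2^(i+1) ≠ 261 := by
  intro h
  rw [show i+7 = (i+6)+1 from rfl, two_pow_succ, show i+1 = i+1 from rfl, two_pow_succ] at h
  omega

lemma S4J (i : ℕ) : 2^(i+7) + 2^(i+2) + 2^i ≠ 261 := by
  rcases i with _ | i
  · norm_num
  · intro h
    rw [show i+1+7 = (i+7)+1 from rfl, two_pow_succ, show i+1+2 = (i+2)+1 from rfl, two_pow_succ,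
      two_pow_succ] at h
    omega

lemma S4T (i : ℕ) : 2^(i+7) + 2^(i+4) + 2^(i+1) ≠ 261 := by
  intro h
  rw [show i+7 = (i+6)+1 from rfl, two_pow_succ, show i+4 = (i+3)+1 from rfl, two_pow_succ,
    show i+1 = i+1 from rfl, two_pow_succ] at h
  omega

lemma S4V (i : ℕ) : 2^(i+7) + 2^(i+5) + 2^i ≠ 261 := by
  rcases i with _ | i
  · norm_num
  · intro h
    rw [show i+1+7 = (i+7)+1 from rfl, two_pow_succ, show i+1+5 = (i+5)+1 from rfl, two_pow_succ,
      two_pow_succ] at h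
    omega

lemma S4V' (i : ℕ) : 2^(i+8) + 2^i ≠ 261 := by
  rcases i with _ | i
  · norm_num
  · intro h
    rw [show i+1+8 = (i+8)+1 from rfl, two_pow_succ, two_pow_succ] at h
    omega

lemma S4U (i : ℕ) : 2^(i+8) + 2^(i+3) + 2^i ≠ 261 := by
  rcases i with _ | i
  · norm_num
  · intro h
    rw [show i+1+8 = (i+8)+1 from rfl, two_pow_succ, show i+1+3 = (i+3)+1 from rfl, two_pow_succ,
      two_pow_succ] at h
    omega

lemma weight_eq_multiset (w : Gen → ℕ) (d : Gen →₀ ℕ) :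
    Finsupp.weight w d = ((Finsupp.toMultiset d).map w).sum := by
  induction d using Finsupp.induction with
  | zero => simp
  | single_add a n f _ _ ih =>
    rw [map_add, map_add, Multiset.map_add, Multiset.sum_add, ih]
    congr 1
    rw [Finsupp.toMultiset_single, Finsupp.weight_apply, Finsupp.sum_single_index,
      Multiset.map_nsmul, Multiset.map_singleton, Multiset.nsmul_singleton,
      Multiset.sum_replicate, smul_eq_mul]
    simp

end Aux

-- the four target exponent vectors
def E0 : Gen →₀ ℕ := Multiset.toFinsupp {Gen.h 0, Gen.D3 2}
def E1 : Gen →₀ ℕ := Multiset.toFinsupp {Gen.h 0, Gen.h 0, Gen.h 0, Gen.h 1, Gen.h 8}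
def E2 : Gen →₀ ℕ := Multiset.toFinsupp {Gen.h 0, Gen.h 1, Gen.h 1, Gen.h 7, Gen.h 7}
def E3 : Gen →₀ ℕ := Multiset.toFinsupp {Gen.h 0, Gen.h 2, Gen.h 6, Gen.h 6, Gen.h 7}

lemma classifyList : ∀ l : List Gen, (l.map hdeg).sum = 5 → (l.map ideg).sum = 261 →
    ((l : Multiset Gen) = {Gen.h 0, Gen.D3 2} ∨
     (l : Multiset Gen) = {Gen.h 0, Gen.h 0, Gen.h 0, Gen.h 1, Gen.h 8} ∨
     (l : Multiset Gen) = {Gen.h 0, Gen.h 1, Gen.h 1, Gen.h 7, Gen.h 7} ∨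
     (l : Multiset Gen) = {Gen.h 0, Gen.h 2, Gen.h 6, Gen.h 6, Gen.h 7}) := by
  intro l h5 h261
  have hlen : l.length ≤ 5 := by
    have key : l.length ≤ (l.map hdeg).sum := by
      clear h5 h261
      induction l with
      | nil => simp
      | cons a t ih =>
        simp only [List.map_cons, List.sum_cons, List.length_cons]
        have := hdeg_pos a
        omega
    omega
  rcases l with _ | ⟨a, _ | ⟨b, _ | ⟨c, _ | ⟨d, _ | ⟨e, _ | ⟨f, t⟩⟩⟩⟩⟩⟩
  · simp at h5
  · -- length 1
    simp only [List.map_cons, List.map_nil, List.sum_cons, List.sum_nil, add_zero] at h5 h261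
    rcases hdeg_eq_five h5 with rfl | rfl | ⟨i, rfl⟩ | ⟨i, rfl⟩ | ⟨i, rfl⟩ | ⟨i, rfl⟩ | ⟨i, rfl⟩ |
      ⟨i, rfl⟩ | ⟨i, rfl⟩ | ⟨i, rfl⟩ | ⟨i, rfl⟩ | ⟨i, rfl⟩ | ⟨i, rfl⟩ <;>
      simp only [ideg] at h261
    · norm_num at h261
    · norm_num at h261
    · exact absurd h261 (S4n i)
    · exact absurd h261 (S4x i)
    · exact absurd h261 (S4D1 i)
    · exact absurd h261 (S4H1 i)
    · exact absurd h261 (S4Q3 i)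
    · exact absurd h261 (S4K i)
    · exact absurd h261 (S4J i)
    · exact absurd h261 (S4T i)
    · exact absurd h261 (S4V i)
    · exact absurd h261 (S4V' i)
    · exact absurd h261 (S4U i)
  · -- length 2
    simp only [List.map_cons, List.map_nil, List.sum_cons, List.sum_nil, add_zero] at h5 h261
    rcases hdeg_cases a with ha | ha | ha | ha <;> rcases hdeg_cases b with hb | hb | hb | hb <;>
      try omega
    · -- hdeg a = 1, hdeg b = 4
      obtain ⟨i, rfl⟩ := hdeg_eq_one ha
      rcases hdeg_eq_four hb with ⟨j, rfl⟩ | ⟨j, rfl⟩ | ⟨j, rfl⟩ | ⟨j, rfl⟩ | ⟨j, rfl⟩ |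
        ⟨j, rfl⟩ | ⟨j, rfl⟩ <;> simp only [ideg] at h261
      · exact absurd (by linarith : 2^i + 2^(j+4) + 2^(j+1) = 261) (S3d i j)
      · exact absurd (by linarith : 2^i + 2^(j+4) + 2^(j+2) + 2^j = 261) (S3e i j)
      · exact absurd (by linarith : 2^i + 2^(j+4) + 2^(j+2) + 2^(j+1) = 261) (S3f i j)
      · exact absurd (by linarith : 2^i + 2^(j+4) + 2^(j+3) = 261) (S3g i j)
      · exact absurd (by linarith : 2^i + 2^(j+5) + 2^(j+2) + 2^j = 261) (S3p i j)
      · obtain ⟨rfl, rfl⟩ := S3D3 i j (by linarith)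
        left; rfl
      · exact absurd (by linarith : 2^i + 2^(j+6) + 2^(j+3) + 2^j = 261) (S3p' i j)
    · -- hdeg a = 4, hdeg b = 1
      obtain ⟨i, rfl⟩ := hdeg_eq_one hb
      rcases hdeg_eq_four ha with ⟨j, rfl⟩ | ⟨j, rfl⟩ | ⟨j, rfl⟩ | ⟨j, rfl⟩ | ⟨j, rfl⟩ |
        ⟨j, rfl⟩ | ⟨j, rfl⟩ <;> simp only [ideg] at h261
      · exact absurd (by linarith : 2^i + 2^(j+4) + 2^(j+1) = 261) (S3d i j)
      · exact absurd (by linarith : 2^i + 2^(j+4) + 2^(j+2) + 2^j = 261) (S3e i j)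
      · exact absurd (by linarith : 2^i + 2^(j+4) + 2^(j+2) + 2^(j+1) = 261) (S3f i j)
      · exact absurd (by linarith : 2^i + 2^(j+4) + 2^(j+3) = 261) (S3g i j)
      · exact absurd (by linarith : 2^i + 2^(j+5) + 2^(j+2) + 2^j = 261) (S3p i j)
      · obtain ⟨rfl, rfl⟩ := S3D3 i j (by linarith)
        left; decide
      · exact absurd (by linarith : 2^i + 2^(j+6) + 2^(j+3) + 2^j = 261) (S3p' i j)
  · -- length 3
    simp only [List.map_cons, List.map_nil, List.sum_cons, List.sum_nil, add_zero] at h5 h261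
    rcases hdeg_cases a with ha | ha | ha | ha <;> rcases hdeg_cases b with hb | hb | hb | hb <;>
      rcases hdeg_cases c with hc | hc | hc | hc <;> try omega
    · -- 1,1,3
      obtain ⟨i, rfl⟩ := hdeg_eq_one ha
      obtain ⟨j, rfl⟩ := hdeg_eq_one hb
      obtain ⟨k, rfl⟩ := hdeg_eq_three hc
      simp only [ideg] at h261
      exact absurd (by linarith : 2^i + 2^j + 2^(k+3) + 2^(k+1) + 2^k = 261) (S2 i j k)
    · -- 1,3,1
      obtain ⟨i, rfl⟩ := hdeg_eq_one ha
      obtain ⟨k, rfl⟩ := hdeg_eq_three hb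
      obtain ⟨j, rfl⟩ := hdeg_eq_one hc
      simp only [ideg] at h261
      exact absurd (by linarith : 2^i + 2^j + 2^(k+3) + 2^(k+1) + 2^k = 261) (S2 i j k)
    · -- 3,1,1
      obtain ⟨k, rfl⟩ := hdeg_eq_three ha
      obtain ⟨i, rfl⟩ := hdeg_eq_one hb
      obtain ⟨j, rfl⟩ := hdeg_eq_one hc
      simp only [ideg] at h261
      exact absurd (by linarith : 2^i + 2^j + 2^(k+3) + 2^(k+1) + 2^k = 261) (S2 i j k)
  · -- length 4: impossible
    simp only [List.map_cons, List.map_nil, List.sum_cons, List.sum_nil, add_zero] at h5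
    rcases hdeg_cases a with ha | ha | ha | ha <;> rcases hdeg_cases b with hb | hb | hb | hb <;>
      rcases hdeg_cases c with hc | hc | hc | hc <;>
      rcases hdeg_cases d with hd | hd | hd | hd <;> omega
  · -- length 5: all h's
    simp only [List.map_cons, List.map_nil, List.sum_cons, List.sum_nil, add_zero] at h5 h261
    have pa := hdeg_pos a; have pb := hdeg_pos b; have pc := hdeg_pos c
    have pd := hdeg_pos d; have pe := hdeg_pos e
    obtain ⟨i1, rfl⟩ := hdeg_eq_one (by omega : hdeg a = 1)
    obtain ⟨i2, rfl⟩ := hdeg_eq_one (by omega : hdeg b = 1)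
    obtain ⟨i3, rfl⟩ := hdeg_eq_one (by omega : hdeg c = 1)
    obtain ⟨i4, rfl⟩ := hdeg_eq_one (by omega : hdeg d = 1)
    obtain ⟨i5, rfl⟩ := hdeg_eq_one (by omega : hdeg e = 1)
    simp only [ideg] at h261
    rcases S1 i1 i2 i3 i4 i5 (by linarith) with hm | hm | hm
    · right; left
      have h' := congrArg (Multiset.map Gen.h) hm
      simp at h'; exact h'
    · right; right; left
      have h' := congrArg (Multiset.map Gen.h) hm
      simp at h'; exact h'
    · right; right; right
      have h' := congrArg (Multiset.map Gen.h) hm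
      simp at h'; exact h'
  · -- length ≥ 6 : contradiction
    simp only [List.length_cons] at hlen
    omega

lemma classify (d : Gen →₀ ℕ) (h5 : Finsupp.weight hdeg d = 5)
    (h261 : Finsupp.weight ideg d = 261) :
    d = E0 ∨ d = E1 ∨ d = E2 ∨ d = E3 := by
  rw [weight_eq_multiset] at h5 h261
  simp only [E0, E1, E2, E3, ← Finsupp.toMultiset_eq_iff]
  obtain ⟨l, hl⟩ := Quot.exists_rep (Finsupp.toMultiset d)
  rw [← hl] at h5 h261 ⊢
  have hl5 : (l.map hdeg).sum = 5 := by
    simpa [← Multiset.map_coe, ← Multiset.sum_coe, Multiset.quot_mk_to_coe] using h5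
  have hl261 : (l.map ideg).sum = 261 := by
    simpa [← Multiset.map_coe, ← Multiset.sum_coe, Multiset.quot_mk_to_coe] using h261
  simpa [Multiset.quot_mk_to_coe] using classifyList l hl5 hl261

-- monomials attached to the exponent vectors
lemma X_eq_monomial (g : Gen) : (X g : P) = monomial (Finsupp.single g 1) 1 := by
  rw [← pow_one (X g : P), X_pow_eq_monomial]

lemma E0_eq : E0 = Finsupp.single (Gen.h 0) 1 + Finsupp.single (Gen.D3 2) 1 := by
  ext g
  cases g <;>
    simp [E0, Multiset.insert_eq_cons, Multiset.count_cons, Multiset.count_singleton,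
      Finsupp.single_apply] <;>
    (try split_ifs) <;> omega

lemma E1_eq : E1 = Finsupp.single (Gen.h 0) 3 + Finsupp.single (Gen.h 1) 1
    + Finsupp.single (Gen.h 8) 1 := by
  ext g
  cases g <;>
    simp [E1, Multiset.insert_eq_cons, Multiset.count_cons, Multiset.count_singleton,
      Finsupp.single_apply] <;>
    (try split_ifs) <;> omega

lemma E2_eq : E2 = Finsupp.single (Gen.h 0) 1 + Finsupp.single (Gen.h 1) 2
    + Finsupp.single (Gen.h 7) 2 := by
  ext g
  cases g <;>
    simp [E2, Multiset.insert_eq_cons, Multiset.count_cons, Multiset.count_singleton,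
      Finsupp.single_apply] <;>
    (try split_ifs) <;> omega

lemma E3_eq : E3 = Finsupp.single (Gen.h 0) 1 + Finsupp.single (Gen.h 2) 1
    + Finsupp.single (Gen.h 6) 2 + Finsupp.single (Gen.h 7) 1 := by
  ext g
  cases g <;>
    simp [E3, Multiset.insert_eq_cons, Multiset.count_cons, Multiset.count_singleton,
      Finsupp.single_apply] <;>
    (try split_ifs) <;> omega

lemma monomial_E0 (r : ZMod 2) :
    (monomial E0 r : P) = r • (X (Gen.h 0) * X (Gen.D3 2)) := by
  rw [E0_eq, X_eq_monomial, X_eq_monomial, monomial_mul, smul_monomial]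
  simp

lemma monomial_E1 (r : ZMod 2) :
    (monomial E1 r : P) = r • (X (Gen.h 0) ^ 3 * X (Gen.h 1) * X (Gen.h 8)) := by
  rw [E1_eq, X_pow_eq_monomial, X_eq_monomial, X_eq_monomial, monomial_mul, monomial_mul,
    smul_monomial]
  simp

lemma monomial_E2 (r : ZMod 2) :
    (monomial E2 r : P) = r • (X (Gen.h 0) * X (Gen.h 1) ^ 2 * X (Gen.h 7) ^ 2) := by
  rw [E2_eq, X_eq_monomial, X_pow_eq_monomial, X_pow_eq_monomial, monomial_mul, monomial_mul,
    smul_monomial]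
  simp

lemma monomial_E3 (r : ZMod 2) :
    (monomial E3 r : P) = r • (X (Gen.h 0) * X (Gen.h 2) * X (Gen.h 6) ^ 2 * X (Gen.h 7)) := by
  rw [E3_eq, X_eq_monomial, X_eq_monomial, X_pow_eq_monomial, X_eq_monomial, monomial_mul,
    monomial_mul, monomial_mul, smul_monomial]
  simp

-- relations h_j h_{j+1} = 0 in E'
lemma rel_hh (j : ℕ) : mkE (X (Gen.h j) * X (Gen.h (j+1))) = 0 := by
  have hmem : (X (Gen.h j) * X (Gen.h (j+1)) : P) ∈ relIdeal := by
    apply Ideal.subset_span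
    exact Set.mem_iUnion.mpr ⟨j, Set.mem_insert _ _⟩
  have heq : mkE (X (Gen.h j) * X (Gen.h (j+1)))
      = Ideal.Quotient.mk relIdeal (X (Gen.h j) * X (Gen.h (j+1))) := rfl
  rw [heq, Ideal.Quotient.eq_zero_iff_mem]
  exact hmem

lemma zero1 : mkE (X (Gen.h 0) ^ 3 * X (Gen.h 1) * X (Gen.h 8)) = 0 := by
  have : (X (Gen.h 0) ^ 3 * X (Gen.h 1) * X (Gen.h 8) : P)
      = (X (Gen.h 0) * X (Gen.h 1)) * (X (Gen.h 0) ^ 2 * X (Gen.h 8)) := by ring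
  rw [this, map_mul, rel_hh 0, zero_mul]

lemma zero2 : mkE (X (Gen.h 0) * X (Gen.h 1) ^ 2 * X (Gen.h 7) ^ 2) = 0 := by
  have : (X (Gen.h 0) * X (Gen.h 1) ^ 2 * X (Gen.h 7) ^ 2 : P)
      = (X (Gen.h 0) * X (Gen.h 1)) * (X (Gen.h 1) * X (Gen.h 7) ^ 2) := by ring
  rw [this, map_mul, rel_hh 0, zero_mul]

lemma zero3 : mkE (X (Gen.h 0) * X (Gen.h 2) * X (Gen.h 6) ^ 2 * X (Gen.h 7)) = 0 := by
  have : (X (Gen.h 0) * X (Gen.h 2) * X (Gen.h 6) ^ 2 * X (Gen.h 7) : P)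
      = (X (Gen.h 6) * X (Gen.h 7)) * (X (Gen.h 0) * X (Gen.h 2) * X (Gen.h 6)) := by ring
  rw [this, map_mul, rel_hh 6, zero_mul]

-- nonvanishing of h0 * D3 2 via an evaluation
def v : Gen → ZMod 2
  | .h i => if i = 0 then 1 else 0
  | .D3 i => if i = 2 then 1 else 0
  | _ => 0

lemma relsKilled : ∀ r ∈ rels, (aeval v : P →ₐ[ZMod 2] ZMod 2) r = 0 := by
  intro r hr
  simp only [rels, Set.mem_iUnion, Set.mem_insert_iff, Set.mem_singleton_iff] at hr
  obtain ⟨j, hr⟩ := hr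
  rcases hr with rfl|rfl|rfl|rfl|rfl|rfl|rfl|rfl|rfl|rfl|rfl|rfl|rfl|rfl|rfl|rfl|rfl|rfl|rfl|rfl|
    rfl|rfl|rfl|rfl|rfl|rfl|rfl|rfl|rfl|rfl|rfl|rfl|rfl|rfl|rfl|rfl|rfl|rfl|rfl|rfl|rfl|rfl|rfl|
    rfl|rfl|rfl|rfl <;>
  · simp only [map_mul, map_sub, map_pow, aeval_X, v]
    split_ifs <;> (try simp_all) <;> (try omega)

lemma mkE_ne_zero : mkE (X (Gen.h 0) * X (Gen.D3 2)) ≠ 0 := by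
  intro h
  have hmem : (X (Gen.h 0) * X (Gen.D3 2) : P) ∈ relIdeal := by
    rwa [mkE, Ideal.Quotient.mkₐ_eq_mk, Ideal.Quotient.eq_zero_iff_mem] at h
  have hker : relIdeal ≤ RingHom.ker (aeval v : P →ₐ[ZMod 2] ZMod 2) := by
    rw [relIdeal, Ideal.span_le]
    intro r hr
    exact relsKilled r hr
  have := hker hmem
  rw [RingHom.mem_ker] at this
  simp only [map_mul, aeval_X, v] at this
  norm_num at this


/-- `E′^{5,261}` is one-dimensional over `F₂` with basis the class of `h₀D₃(2)`; moreover
`h₀³h₁h₈ = h₀h₁²h₇² = h₀h₂h₆²h₇ = 0` in `E′`. -/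
theorem stmt11 :
    component 5 261 = Submodule.span (ZMod 2) {mkE (X (Gen.h 0) * X (Gen.D3 2))} ∧
      mkE (X (Gen.h 0) * X (Gen.D3 2)) ≠ 0 ∧
      mkE (X (Gen.h 0) ^ 3 * X (Gen.h 1) * X (Gen.h 8)) = 0 ∧
      mkE (X (Gen.h 0) * X (Gen.h 1) ^ 2 * X (Gen.h 7) ^ 2) = 0 ∧
      mkE (X (Gen.h 0) * X (Gen.h 2) * X (Gen.h 6) ^ 2 * X (Gen.h 7)) = 0 := by
  refine ⟨?_, mkE_ne_zero, zero1, zero2, zero3⟩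
  apply le_antisymm
  · rintro _ ⟨p, hp, rfl⟩
    have hp5 : p.IsWeightedHomogeneous hdeg 5 := hp.1
    have hp261 : p.IsWeightedHomogeneous ideg 261 := hp.2
    have : (mkE.toLinearMap p : E') = mkE p := rfl
    rw [this, p.as_sum, map_sum]
    apply Submodule.sum_mem
    intro dd hdd
    have h5 := hp5 (MvPolynomial.mem_support_iff.mp hdd)
    have h261 := hp261 (MvPolynomial.mem_support_iff.mp hdd)
    rcases classify dd h5 h261 with rfl | rfl | rfl | rfl
    · rw [monomial_E0, map_smul]
      exact Submodule.smul_mem _ _ (Submodule.mem_span_singleton_self _)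
    · rw [monomial_E1, map_smul, zero1, smul_zero]
      exact Submodule.zero_mem _
    · rw [monomial_E2, map_smul, zero2, smul_zero]
      exact Submodule.zero_mem _
    · rw [monomial_E3, map_smul, zero3, smul_zero]
      exact Submodule.zero_mem _
  · rw [Submodule.span_le, Set.singleton_subset_iff]
    refine ⟨X (Gen.h 0) * X (Gen.D3 2), ⟨?_, ?_⟩, rfl⟩
    · have := (isWeightedHomogeneous_X (ZMod 2) hdeg (Gen.h 0)).mul
        (isWeightedHomogeneous_X (ZMod 2) hdeg (Gen.D3 2))
      simpa [hdeg] using this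
    · have := (isWeightedHomogeneous_X (ZMod 2) ideg (Gen.h 0)).mul
        (isWeightedHomogeneous_X (ZMod 2) ideg (Gen.D3 2))
      simpa [ideg] using this
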